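/- arXiv:0706.1740 — 3 statements merged into one kernel-verified Lean document; each statement's English description precedes it below -/
import Mathlib

section
/- Let F be a pseudo path factor of a (3,4)-biregular bipartite graph G with bipartition (Y,X). Then F has a component which is a path of length at least 4 (i.e., with at least 4 edges). -/
noncomputable def fdeg {V : Type*} (G : SimpleGraph V) (v : V) : ℕ := (G.neighborSet v).ncard

lemma fdeg_eq {V : Type*} [Fintype V] (H : SimpleGraph V) [DecidableRel H.Adj] (v : V) :
    fdeg H v = (H.neighborFinset v).card := by
  rw [fdeg, Set.ncard_eq_toFinset_card', Set.toFinset_card, SimpleGraph.neighborFinset_def,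
    Set.toFinset_card]

lemma bip_sum {V : Type*} [Fintype V] (H : SimpleGraph V) [DecidableRel H.Adj] (Y X : Finset V)
    (hYX : ∀ v, v ∈ Y → v ∉ X)
    (hbip : ∀ u v, H.Adj u v → (u ∈ Y ∧ v ∈ X) ∨ (u ∈ X ∧ v ∈ Y)) :
    ∑ y ∈ Y, (H.neighborFinset y).card = ∑ x ∈ X, (H.neighborFinset x).card := by
  have h1 : ∀ y ∈ Y, H.neighborFinset y = X.filter (fun x => H.Adj y x) := by
    intro y hy
    ext v
    simp only [SimpleGraph.mem_neighborFinset, Finset.mem_filter]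
    constructor
    · intro h
      refine ⟨?_, h⟩
      rcases hbip y v h with ⟨_, hv⟩ | ⟨hyX, _⟩
      · exact hv
      · exact absurd hyX (hYX y hy)
    · exact fun h => h.2
  have h2 : ∀ x ∈ X, H.neighborFinset x = Y.filter (fun y => H.Adj y x) := by
    intro x hx
    ext v
    simp only [SimpleGraph.mem_neighborFinset, Finset.mem_filter]
    constructor
    · intro h
      refine ⟨?_, h.symm⟩
      rcases hbip x v h with ⟨hxY, _⟩ | ⟨_, hv⟩
      · exact absurd hx (hYX x hxY)
      · exact hv
    · exact fun h => h.2.symm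
  calc ∑ y ∈ Y, (H.neighborFinset y).card
      = ∑ y ∈ Y, ∑ x ∈ X, if H.Adj y x then 1 else 0 := by
        refine Finset.sum_congr rfl fun y hy => ?_
        rw [h1 y hy, Finset.card_filter]
    _ = ∑ x ∈ X, ∑ y ∈ Y, if H.Adj y x then 1 else 0 := Finset.sum_comm
    _ = ∑ x ∈ X, (H.neighborFinset x).card := by
        refine Finset.sum_congr rfl fun x hx => ?_
        rw [h2 x hx, Finset.card_filter]

/-- Let `F` be a pseudo path factor of a (3,4)-biregular bipartite graph `G` with
bipartition `(Y, X)` (every component of `F` is a path of even positive length,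
with both endpoints in `Y`, and every `x ∈ X` has degree 2 in `F`).  Then `F` has
a component which is a path of length at least 4, i.e. `F` contains a path with at
least 4 edges. -/
theorem stmt_2 {V : Type*} [Fintype V] (G : SimpleGraph V) (Y X : Finset V)
    (hpart : ∀ v, (v ∈ Y ∧ v ∉ X) ∨ (v ∈ X ∧ v ∉ Y))
    (hbip : ∀ u v, G.Adj u v → (u ∈ Y ∧ v ∈ X) ∨ (u ∈ X ∧ v ∈ Y))
    (hY : ∀ y ∈ Y, fdeg G y = 3) (hX : ∀ x ∈ X, fdeg G x = 4)
    (hne : X.Nonempty)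
    (F : SimpleGraph V) (hFG : F ≤ G) (hacyc : F.IsAcyclic)
    (hFX : ∀ x ∈ X, fdeg F x = 2) (hFY : ∀ y ∈ Y, fdeg F y ≤ 2)
    (hends : ∀ v, fdeg F v = 1 → v ∈ Y) :
    ∃ (u v : V) (p : F.Walk u v), p.IsPath ∧ 4 ≤ p.length := by
  classical
  by_contra hcon
  push_neg at hcon
  have hYX : ∀ v, v ∈ Y → v ∉ X := by
    intro v hv
    rcases hpart v with ⟨_, h⟩ | ⟨_, h⟩
    · exact h
    · exact absurd hv h
  have hXY : ∀ v, v ∈ X → v ∉ Y := by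
    intro v hv
    rcases hpart v with ⟨_, h⟩ | ⟨_, h⟩
    · exact fun hy => h hv
    · exact h
  have hFbip : ∀ u v, F.Adj u v → (u ∈ Y ∧ v ∈ X) ∨ (u ∈ X ∧ v ∈ Y) :=
    fun u v h => hbip u v (hFG h)
  -- any F-neighbor of a Y vertex is in X, and vice versa
  have hnbX : ∀ y ∈ Y, ∀ v, F.Adj y v → v ∈ X := by
    intro y hy v h
    rcases hFbip y v h with ⟨_, hv⟩ | ⟨hyX, _⟩
    · exact hv
    · exact absurd hyX (hYX y hy)
  have hnbY : ∀ x ∈ X, ∀ v, F.Adj x v → v ∈ Y := by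
    intro x hx v h
    rcases hFbip x v h with ⟨hxY, _⟩ | ⟨_, hv⟩
    · exact absurd hx (hYX x hxY)
    · exact hv
  -- a degree-2 vertex adjacent to w has another neighbor
  have two : ∀ v w, fdeg F v = 2 → F.Adj v w → ∃ w', F.Adj v w' ∧ w' ≠ w := by
    intro v w h2 hadj
    rw [fdeg, Set.ncard_eq_two] at h2
    obtain ⟨a, b, hab, hs⟩ := h2
    have hw : w ∈ ({a, b} : Set V) := hs ▸ hadj
    have ha : F.Adj v a := by rw [← SimpleGraph.mem_neighborSet, hs]; left; rfl
    have hb : F.Adj v b := by rw [← SimpleGraph.mem_neighborSet, hs]; right; rfl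
    rcases hw with hw | hw
    · exact ⟨b, hb, by rw [hw]; exact hab.symm⟩
    · exact ⟨a, ha, by rw [hw]; exact hab⟩
  -- key claim: every y ∈ Y has F-degree ≤ 1
  have key : ∀ y ∈ Y, fdeg F y ≤ 1 := by
    intro y hy
    by_contra hk
    have h2 : fdeg F y = 2 := le_antisymm (hFY y hy) (by omega)
    rw [fdeg, Set.ncard_eq_two] at h2
    obtain ⟨x, x', hxx', hs⟩ := h2
    have hyx : F.Adj y x := by rw [← SimpleGraph.mem_neighborSet, hs]; left; rfl
    have hyx' : F.Adj y x' := by rw [← SimpleGraph.mem_neighborSet, hs]; right; rfl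
    have hxX : x ∈ X := hnbX y hy x hyx
    have hx'X : x' ∈ X := hnbX y hy x' hyx'
    obtain ⟨y1, hy1, hy1y⟩ := two x y (hFX x hxX) hyx.symm
    obtain ⟨y2, hy2, hy2y⟩ := two x' y (hFX x' hx'X) hyx'.symm
    have hy1Y : y1 ∈ Y := hnbY x hxX y1 hy1
    have hy2Y : y2 ∈ Y := hnbY x' hx'X y2 hy2
    by_cases h12 : y1 = y2
    · -- two distinct paths from y1 to y: contradiction with acyclicity
      subst h12
      let p1 : F.Walk y1 y := SimpleGraph.Walk.cons hy1.symm (SimpleGraph.Walk.cons hyx.symm SimpleGraph.Walk.nil)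
      let p2 : F.Walk y1 y := SimpleGraph.Walk.cons hy2.symm (SimpleGraph.Walk.cons hyx'.symm SimpleGraph.Walk.nil)
      have hp1 : p1.IsPath := by
        rw [SimpleGraph.Walk.isPath_def]
        simp [p1]
        refine ⟨⟨?_, hy1y⟩, ?_⟩
        · exact fun h => (hYX y1 hy1Y) (h ▸ hxX)
        · exact fun h => (hYX y hy) (h ▸ hxX)
      have hp2 : p2.IsPath := by
        rw [SimpleGraph.Walk.isPath_def]
        simp [p2]
        refine ⟨⟨?_, hy2y⟩, ?_⟩
        · exact fun h => (hYX y1 hy2Y) (h ▸ hx'X)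
        · exact fun h => (hYX y hy) (h ▸ hx'X)
      have := SimpleGraph.isAcyclic_iff_path_unique.mp hacyc ⟨p1, hp1⟩ ⟨p2, hp2⟩
      have hsup := congrArg (fun q : F.Path y1 y => q.1.support) this
      simp only [p1, p2, SimpleGraph.Walk.support_cons, SimpleGraph.Walk.support_nil] at hsup
      simp only [List.cons.injEq] at hsup
      exact hxx' hsup.2.1
    · -- build a path of length 4
      let p : F.Walk y1 y2 :=
        SimpleGraph.Walk.cons hy1.symm (SimpleGraph.Walk.cons hyx.symm
          (SimpleGraph.Walk.cons hyx' (SimpleGraph.Walk.cons hy2 SimpleGraph.Walk.nil)))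
      have hp : p.IsPath := by
        have nYX : ∀ a b : V, a ∈ Y → b ∈ X → a ≠ b := by
          intro a b ha hb h
          exact (hYX a ha) (h ▸ hb)
        have n1 := nYX y1 x hy1Y hxX
        have n1' := n1.symm
        have n2 := nYX y1 x' hy1Y hx'X
        have n2' := n2.symm
        have n3 := nYX y x hy hxX
        have n3' := n3.symm
        have n4 := nYX y x' hy hx'X
        have n4' := n4.symm
        have n5 := nYX y2 x hy2Y hxX
        have n5' := n5.symm
        have n6 := nYX y2 x' hy2Y hx'X
        have n6' := n6.symm
        have n7 := hy1y
        have n7' := hy1y.symm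
        have n8 := hy2y
        have n8' := hy2y.symm
        have n9 := h12
        have n9' : y2 ≠ y1 := fun h => h12 h.symm
        have n10 := hxx'
        have n10' := hxx'.symm
        simp only [p, SimpleGraph.Walk.isPath_def, SimpleGraph.Walk.support_cons,
          SimpleGraph.Walk.support_nil, List.nodup_cons, List.mem_cons, List.mem_singleton,
          List.not_mem_nil, List.nodup_nil, not_or, and_true, or_false]
        tauto
      have hlen : p.length = 4 := by simp [p]
      have := hcon y1 y2 p hp
      omega
  -- counting
  have hGsum := bip_sum G Y X hYX hbip
  have hFsum := bip_sum F Y X hYX hFbip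
  simp only [← fdeg_eq] at hGsum hFsum
  have e1 : 3 * Y.card = 4 * X.card := by
    rw [Finset.sum_congr rfl hY, Finset.sum_congr rfl hX] at hGsum
    simpa [Finset.sum_const, mul_comm] using hGsum
  have e2 : ∑ y ∈ Y, fdeg F y = 2 * X.card := by
    rw [hFsum, Finset.sum_congr rfl hFX]
    simp [Finset.sum_const, mul_comm]
  have e3 : ∑ y ∈ Y, fdeg F y ≤ Y.card := by
    calc ∑ y ∈ Y, fdeg F y ≤ ∑ _y ∈ Y, 1 := Finset.sum_le_sum key
      _ = Y.card := by simp
  have hX0 : X.card = 0 := by omega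
  rw [Finset.card_eq_zero] at hX0
  exact hne.ne_empty hX0
end

section
/- Let F be a pseudo path factor of a simple (3,4)-biregular bipartite graph G with bipartition (Y,X), and suppose some vertex y0 in Y has degree 0 in F. Then there exists a pseudo path factor F' of G such that the set of Y-vertices covered by F' equals the set covered by F together with y0. -/
namespace PPF
open SimpleGraph Finset
open scoped Classical

variable {V : Type*} [Fintype V]


lemma fdeg_eq_filter (F : SimpleGraph V) (v : V) :
    fdeg F v = (Finset.univ.filter (fun w => F.Adj v w)).card := by
  rw [fdeg, ← Set.ncard_coe_finset]
  congr 1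
  ext w
  simp [neighborSet]

lemma fdeg_pos_of_adj {F : SimpleGraph V} {v w : V} (h : F.Adj v w) : 0 < fdeg F v := by
  rw [fdeg, Set.ncard_pos (Set.toFinite _)]
  exact ⟨w, h⟩

lemma not_adj_of_fdeg_zero {F : SimpleGraph V} {v : V} (h : fdeg F v = 0) (w : V) :
    ¬ F.Adj v w := fun ha => by simpa [h] using fdeg_pos_of_adj ha

lemma neighborSet_eq_singleton {F : SimpleGraph V} {v w : V} (h1 : fdeg F v = 1)
    (h : F.Adj v w) : F.neighborSet v = {w} := by
  rw [fdeg, Set.ncard_eq_one] at h1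
  obtain ⟨a, ha⟩ := h1
  have : w ∈ F.neighborSet v := h
  rw [ha] at this ⊢
  simp_all

lemma eq_of_fdeg_one {F : SimpleGraph V} {v w w' : V} (h1 : fdeg F v = 1)
    (h : F.Adj v w) (h' : F.Adj v w') : w = w' := by
  have := neighborSet_eq_singleton h1 h
  have hw' : w' ∈ F.neighborSet v := h'
  rw [this] at hw'
  simp_all [eq_comm]

/-- The swap operation: delete edge `xu`, add edge `ax`. -/
def swap (F : SimpleGraph V) (a x u : V) : SimpleGraph V :=
  (F.deleteEdges {s(x,u)}) ⊔ SimpleGraph.edge a x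

lemma swap_adj {F : SimpleGraph V} {a x u p q : V} :
    (swap F a x u).Adj p q ↔
      (F.Adj p q ∧ ¬ (p = x ∧ q = u ∨ p = u ∧ q = x)) ∨
      ((p = a ∧ q = x ∨ p = x ∧ q = a) ∧ p ≠ q) := by
  simp [swap, deleteEdges_adj, edge_adj, Sym2.eq_iff]

section SwapFacts

variable {F : SimpleGraph V} {a x u : V} (h0 : fdeg F a = 0) (hxu : F.Adj x u)

include h0 hxu

lemma swap_ne_ax : a ≠ x := fun h => not_adj_of_fdeg_zero h0 u (h ▸ hxu)

lemma swap_ne_au : a ≠ u := fun h => not_adj_of_fdeg_zero h0 x (h ▸ hxu.symm)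

lemma swap_ns_a : (swap F a x u).neighborSet a = {x} := by
  have hax := swap_ne_ax h0 hxu
  have hau := swap_ne_au h0 hxu
  ext w
  rw [Set.mem_singleton_iff, mem_neighborSet, swap_adj]
  constructor
  · rintro (⟨h, -⟩ | ⟨(⟨-, rfl⟩ | ⟨rfl, rfl⟩), hne⟩)
    · exact absurd h (not_adj_of_fdeg_zero h0 w)
    · rfl
    · exact absurd rfl hax
  · rintro rfl
    exact Or.inr ⟨Or.inl ⟨rfl, rfl⟩, hax⟩

lemma swap_ns_x : (swap F a x u).neighborSet x = insert a (F.neighborSet x \ {u}) := by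
  have hax := swap_ne_ax h0 hxu
  have hau := swap_ne_au h0 hxu
  have hxune : x ≠ u := hxu.ne
  ext w
  rw [Set.mem_insert_iff, Set.mem_diff, Set.mem_singleton_iff, mem_neighborSet, swap_adj,
    ← mem_neighborSet]
  constructor
  · rintro (⟨h, hn⟩ | ⟨(⟨rfl, -⟩ | ⟨-, rfl⟩), hne⟩)
    · exact Or.inr ⟨h, fun hwu => hn (Or.inl ⟨rfl, hwu⟩)⟩
    · exact absurd rfl hax
    · exact Or.inl rfl
  · rintro (rfl | ⟨h, hwu⟩)
    · exact Or.inr ⟨Or.inr ⟨rfl, rfl⟩, fun h => hax h.symm⟩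
    · exact Or.inl ⟨h, by rintro (⟨-, rfl⟩ | ⟨rfl, -⟩) <;> simp_all⟩

lemma swap_ns_u : (swap F a x u).neighborSet u = F.neighborSet u \ {x} := by
  have hax := swap_ne_ax h0 hxu
  have hau := swap_ne_au h0 hxu
  have hxune : x ≠ u := hxu.ne
  ext w
  rw [Set.mem_diff, Set.mem_singleton_iff, mem_neighborSet, swap_adj, ← mem_neighborSet]
  constructor
  · rintro (⟨h, hn⟩ | ⟨(⟨rfl, -⟩ | ⟨rfl, rfl⟩), hne⟩)
    · exact ⟨h, fun hwx => hn (Or.inr ⟨rfl, hwx⟩)⟩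
    · exact absurd rfl hau.symm
    · exact absurd rfl hxune
  · rintro ⟨h, hwx⟩
    exact Or.inl ⟨h, by rintro (⟨rfl, -⟩ | ⟨-, rfl⟩) <;> simp_all⟩

lemma swap_ns_other {v : V} (h1 : v ≠ a) (h2 : v ≠ x) (h3 : v ≠ u) :
    (swap F a x u).neighborSet v = F.neighborSet v := by
  ext w
  rw [mem_neighborSet, swap_adj, ← mem_neighborSet]
  constructor
  · rintro (⟨h, -⟩ | ⟨(⟨rfl, -⟩ | ⟨rfl, -⟩), -⟩)
    · exact h
    · exact absurd rfl h1
    · exact absurd rfl h2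
  · intro h
    exact Or.inl ⟨h, by rintro (⟨rfl, -⟩ | ⟨rfl, -⟩) <;> simp_all⟩

lemma swap_fdeg_a : fdeg (swap F a x u) a = 1 := by
  rw [fdeg, swap_ns_a h0 hxu]; simp

lemma swap_fdeg_x : fdeg (swap F a x u) x = fdeg F x := by
  rw [fdeg, swap_ns_x h0 hxu]
  have hau : a ∉ F.neighborSet x \ {u} := by
    rintro ⟨h, -⟩
    exact not_adj_of_fdeg_zero h0 x h.symm
  rw [Set.ncard_insert_of_notMem hau (Set.toFinite _),
    Set.ncard_diff_singleton_of_mem (show u ∈ F.neighborSet x from hxu)]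
  have : 0 < fdeg F x := fdeg_pos_of_adj hxu
  rw [fdeg] at this ⊢
  omega

lemma swap_fdeg_u : fdeg (swap F a x u) u = fdeg F u - 1 := by
  rw [fdeg, swap_ns_u h0 hxu, Set.ncard_diff_singleton_of_mem (show x ∈ F.neighborSet u from hxu.symm)]
  rfl

lemma swap_fdeg_other {v : V} (h1 : v ≠ a) (h2 : v ≠ x) (h3 : v ≠ u) :
    fdeg (swap F a x u) v = fdeg F v := by
  rw [fdeg, swap_ns_other h0 hxu h1 h2 h3]; rfl

lemma swap_le {G : SimpleGraph V} (hF : F ≤ G) (hax : G.Adj a x) : swap F a x u ≤ G := by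
  intro p q h
  rcases swap_adj.mp h with ⟨h, -⟩ | ⟨(⟨rfl, rfl⟩ | ⟨rfl, rfl⟩), -⟩
  · exact hF h
  · exact hax
  · exact hax.symm

end SwapFacts




lemma acyclic_mono {F H : SimpleGraph V} (hle : H ≤ F) (hF : F.IsAcyclic) : H.IsAcyclic := by
  intro v c hc
  exact hF (c.mapLe hle) (hc.mapLe hle)

/-- adding a pendant edge at an isolated vertex preserves acyclicity -/
lemma acyclic_sup_edge {F : SimpleGraph V} {a x : V} (hax : a ≠ x)
    (hiso : ∀ w, ¬ F.Adj a w) (hF : F.IsAcyclic) : (F ⊔ SimpleGraph.edge a x).IsAcyclic := by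
  classical
  -- helper: any walk in F ⊔ edge a x ending at a, starting elsewhere, uses edge s(a,x)
  have key : ∀ {w z : V} (p : (F ⊔ SimpleGraph.edge a x).Walk w z), z = a → w ≠ a →
      s(a, x) ∈ p.edges := by
    intro w z p
    induction p with
    | nil => intro hz h; exact absurd (hz ▸ rfl) h
    | @cons w' b z h q ih =>
      intro hz hw
      by_cases hb : b = a
      · subst hb
        have : w' = x := by
          rcases h with h | h
          · exact absurd h.symm (hiso w')
          · rw [edge_adj] at h
            rcases h.1 with ⟨rfl, -⟩ | ⟨rfl, -⟩
            · exact absurd rfl hw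
            · rfl
        subst this
        simp [Sym2.eq_swap]
      · simp [ih hz hb]
  intro v c hc
  by_cases he : s(a, x) ∈ c.edges
  · have hac : a ∈ c.support := c.fst_mem_support_of_mem_edges he
    set c' := c.rotate a hac with hc'def
    have hc' : c'.IsCycle := hc.rotate hac
    cases hc'eq : c' with
    | nil => rw [hc'eq] at hc'; exact hc'.ne_nil rfl
    | @cons _ b _ h p =>
      -- h : Adj a b, p : Walk b a
      have hb : b = x := by
        rcases h with h' | h'
        · exact absurd h' (hiso b)
        · rw [edge_adj] at h'
          rcases h'.1 with ⟨-, rfl⟩ | ⟨rfl, -⟩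
          · rfl
          · exact absurd rfl hax
      subst hb
      have hbne : b ≠ a := fun h => hax h.symm
      have hmem : s(a, b) ∈ p.edges := key p rfl hbne
      have hnodup := hc'.edges_nodup
      rw [hc'eq] at hnodup
      simp only [Walk.edges_cons, List.nodup_cons] at hnodup
      exact hnodup.1 hmem
  · -- transfer to F
    have hsub : ∀ e ∈ c.edges, e ∈ F.edgeSet := by
      intro e hec
      have := c.edges_subset_edgeSet hec
      rw [edgeSet_sup] at this
      rcases this with h | h
      · exact h
      · exfalso
        have hax' : (SimpleGraph.edge a x).edgeSet = {s(a,x)} := edge_edgeSet_of_ne hax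
        rw [hax'] at h
        rw [Set.mem_singleton_iff] at h
        exact he (h ▸ hec)
    exact hF (c.transfer F hsub) (hc.transfer hsub)


/-- Chains: `GS G F y l z` means there is an alternating chain from `y` to `z`,
recorded as a list of pairs `(x, u)` where each `x` is a "2-center". -/
inductive GS (G F : SimpleGraph V) : V → List (V × V) → V → Prop
  | nil (y : V) : GS G F y [] y
  | cons {y z : V} (x u : V) {l : List (V × V)} (hyx : G.Adj y x)
      (hD : ∀ w, F.Adj x w → fdeg F w = 1) (hxu : F.Adj x u)
      (ht : GS G F u l z) : GS G F y ((x, u) :: l) z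

variable {G F : SimpleGraph V}

lemma GS.cons_iff {y z x u : V} {l : List (V × V)} :
    GS G F y ((x, u) :: l) z ↔
      G.Adj y x ∧ (∀ w, F.Adj x w → fdeg F w = 1) ∧ F.Adj x u ∧ GS G F u l z := by
  constructor
  · intro h
    cases h with
    | cons _ _ hyx hD hxu ht => exact ⟨hyx, hD, hxu, ht⟩
  · rintro ⟨h1, h2, h3, h4⟩
    exact GS.cons x u h1 h2 h3 h4

lemma GS.nil_iff {y z : V} : GS G F y [] z ↔ z = y := by
  constructor
  · intro h; cases h; rfl
  · rintro rfl; exact GS.nil _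

lemma GS.append_split {y z : V} {p q : List (V × V)} (h : GS G F y (p ++ q) z) :
    ∃ m, GS G F y p m ∧ GS G F m q z := by
  induction p generalizing y with
  | nil => exact ⟨y, GS.nil y, h⟩
  | cons hd t ih =>
    obtain ⟨x, u⟩ := hd
    rw [List.cons_append, GS.cons_iff] at h
    obtain ⟨h1, h2, h3, h4⟩ := h
    obtain ⟨m, hm1, hm2⟩ := ih h4
    exact ⟨m, GS.cons x u h1 h2 h3 hm1, hm2⟩

lemma GS.snoc {y z x u : V} {l : List (V × V)} (h : GS G F y l z)
    (hzx : G.Adj z x) (hD : ∀ w, F.Adj x w → fdeg F w = 1) (hxu : F.Adj x u) :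
    GS G F y (l ++ [(x, u)]) u := by
  induction h with
  | nil y => exact GS.cons x u hzx hD hxu (GS.nil u)
  | cons x' u' hyx hD' hxu' ht ih => exact GS.cons x' u' hyx hD' hxu' (ih hzx)

lemma GS.foot {y z : V} {l : List (V × V)} (h : GS G F y l z) :
    z = y ∨ ∃ x, (∀ w, F.Adj x w → fdeg F w = 1) ∧ F.Adj x z := by
  induction h with
  | nil y => exact Or.inl rfl
  | cons x u hyx hD hxu ht ih =>
    rcases ih with rfl | h
    · exact Or.inr ⟨x, hD, hxu⟩
    · exact Or.inr h

/-- helper: adjacency of `y ∈ Y` goes to `X`. -/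
lemma adj_mem_X {Y X : Finset V}
    (hpart : ∀ v, (v ∈ Y ∧ v ∉ X) ∨ (v ∈ X ∧ v ∉ Y))
    (hbip : ∀ u v, G.Adj u v → (u ∈ Y ∧ v ∈ X) ∨ (u ∈ X ∧ v ∈ Y))
    {y x : V} (hy : y ∈ Y) (h : G.Adj y x) : x ∈ X := by
  rcases hbip _ _ h with ⟨-, hx⟩ | ⟨hyX, -⟩
  · exact hx
  · rcases hpart y with h' | h' <;> tauto

lemma adj_mem_Y {Y X : Finset V}
    (hpart : ∀ v, (v ∈ Y ∧ v ∉ X) ∨ (v ∈ X ∧ v ∉ Y))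
    (hbip : ∀ u v, G.Adj u v → (u ∈ Y ∧ v ∈ X) ∨ (u ∈ X ∧ v ∈ Y))
    {x w : V} (hx : x ∈ X) (h : G.Adj x w) : w ∈ Y := by
  rcases hbip _ _ h with ⟨hxY, -⟩ | ⟨-, hw⟩
  · rcases hpart x with h' | h' <;> tauto
  · exact hw

/-- Y-side tracking. -/
lemma GS.inY {Y X : Finset V}
    (hpart : ∀ v, (v ∈ Y ∧ v ∉ X) ∨ (v ∈ X ∧ v ∉ Y))
    (hbip : ∀ u v, G.Adj u v → (u ∈ Y ∧ v ∈ X) ∨ (u ∈ X ∧ v ∈ Y))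
    (hFG : F ≤ G) {y z : V} {l : List (V × V)} (h : GS G F y l z) (hy : y ∈ Y) : z ∈ Y := by
  induction h with
  | nil y => exact hy
  | cons x u hyx hD hxu ht ih =>
    exact ih (adj_mem_Y hpart hbip (adj_mem_X hpart hbip hy hyx) (hFG hxu))

/-- Chains can be shortened to have nodup centers with the same foot. -/
lemma GS.shorten : ∀ n (l : List (V × V)) (y z : V), l.length ≤ n → GS G F y l z →
    ∃ l', GS G F y l' z ∧ (l'.map Prod.fst).Nodup ∧ l'.length ≤ l.length := by
  intro n
  induction n with
  | zero =>
    intro l y z hlen h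
    rw [Nat.le_zero, List.length_eq_zero_iff] at hlen
    subst hlen
    exact ⟨[], h, by simp, by simp⟩
  | succ n ih =>
    intro l y z hlen h
    match l with
    | [] => exact ⟨[], h, by simp, by simp⟩
    | (x, u) :: t =>
      rw [GS.cons_iff] at h
      obtain ⟨hyx, hD, hxu, ht⟩ := h
      simp only [List.length_cons, Nat.succ_le_succ_iff] at hlen
      obtain ⟨t', ht', hnd, hle⟩ := ih t u z hlen ht
      by_cases hx : x ∈ t'.map Prod.fst
      · obtain ⟨⟨x₂, u'⟩, hmem, hfst⟩ := List.mem_map.mp hx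
        simp only at hfst
        subst hfst
        obtain ⟨s, r, hsr⟩ := List.append_of_mem hmem
        rw [hsr] at ht' hle
        obtain ⟨m, -, hm2⟩ := GS.append_split ht'
        rw [GS.cons_iff] at hm2
        obtain ⟨-, -, hxu', hr⟩ := hm2
        have hnew : GS G F y ((x₂, u') :: r) z := GS.cons x₂ u' hyx hD hxu' hr
        have hlen' : ((x₂, u') :: r).length ≤ n := by
          simp only [List.length_append, List.length_cons] at hle ⊢
          omega
        obtain ⟨l'', h1, h2, h3⟩ := ih _ y z hlen' hnew
        refine ⟨l'', h1, h2, ?_⟩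
        simp only [List.length_cons, List.length_append] at h3 hle ⊢
        omega
      · refine ⟨(x, u) :: t', GS.cons x u hyx hD hxu ht', ?_, by simpa using hle⟩
        simp only [List.map_cons, List.nodup_cons]
        exact ⟨hx, hnd⟩


lemma swap_acyclic {a x u : V} (h0 : fdeg F a = 0) (hxu : F.Adj x u)
    (hacyc : F.IsAcyclic) : (swap F a x u).IsAcyclic := by
  apply acyclic_sup_edge (swap_ne_ax h0 hxu)
  · intro w h
    rw [deleteEdges_adj] at h
    exact not_adj_of_fdeg_zero h0 w h.1
  · exact acyclic_mono (F.deleteEdges_le {s(x,u)}) hacyc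

lemma mem_Y_not_X {Y X : Finset V} (hpart : ∀ v, (v ∈ Y ∧ v ∉ X) ∨ (v ∈ X ∧ v ∉ Y))
    {v : V} (h : v ∈ Y) : v ∉ X := by rcases hpart v with h' | h' <;> tauto

lemma mem_X_not_Y {Y X : Finset V} (hpart : ∀ v, (v ∈ Y ∧ v ∉ X) ∨ (v ∈ X ∧ v ∉ Y))
    {v : V} (h : v ∈ X) : v ∉ Y := by rcases hpart v with h' | h' <;> tauto

lemma GS.transfer {a x u : V}
    (h0 : fdeg F a = 0) (hxu : F.Adj x u) (hx2 : fdeg F x = 2)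
    (hDx : ∀ w, F.Adj x w → fdeg F w = 1) :
    ∀ {y' z : V} {l : List (V × V)}, GS G F y' l z → x ∉ l.map Prod.fst →
      GS G (swap F a x u) y' l z := by
  intro y' z l h
  induction h with
  | nil y => intro _; exact GS.nil y
  | cons xi ui hyx hD hxiui ht ih =>
    intro hnx
    simp only [List.map_cons, List.mem_cons, not_or] at hnx
    obtain ⟨hne, hnx'⟩ := hnx
    have hxine : xi ≠ x := fun h => hne h.symm
    have hxia : xi ≠ a := fun h => not_adj_of_fdeg_zero h0 ui (h ▸ hxiui)
    have hu1 : fdeg F u = 1 := hDx u hxu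
    have hxiu : xi ≠ u := by
      intro h
      have hAdjU : F.Adj u ui := h ▸ hxiui
      have hui : ui = x := eq_of_fdeg_one hu1 hAdjU hxu.symm
      have : fdeg F x = 1 := hD x (hui ▸ hxiui)
      omega
    have hns : (swap F a x u).neighborSet xi = F.neighborSet xi :=
      swap_ns_other h0 hxu hxia hxine hxiu
    have hadj : ∀ w, (swap F a x u).Adj xi w ↔ F.Adj xi w := by
      intro w
      rw [← mem_neighborSet, ← mem_neighborSet, hns]
    refine GS.cons xi ui (hyx) ?_ ((hadj ui).mpr hxiui) (ih hnx')
    intro w hw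
    have hwF : F.Adj xi w := (hadj w).mp hw
    have hw1 : fdeg F w = 1 := hD w hwF
    have hwa : w ≠ a := fun h => by rw [h, h0] at hw1; omega
    have hwx : w ≠ x := fun h => by rw [h, hx2] at hw1; omega
    have hwu : w ≠ u := by
      intro h
      subst h
      exact hxine (eq_of_fdeg_one hu1 hwF.symm hxu.symm)
    rw [swap_fdeg_other h0 hxu hwa hwx hwu]
    exact hw1

lemma main_aux (G : SimpleGraph V) (Y X : Finset V)
    (hpart : ∀ v, (v ∈ Y ∧ v ∉ X) ∨ (v ∈ X ∧ v ∉ Y))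
    (hbip : ∀ u v, G.Adj u v → (u ∈ Y ∧ v ∈ X) ∨ (u ∈ X ∧ v ∈ Y)) :
    ∀ (l : List (V × V)) (F : SimpleGraph V) (y0 : V), F ≤ G → F.IsAcyclic →
    (∀ x ∈ X, fdeg F x = 2) → (∀ y ∈ Y, fdeg F y ≤ 2) → (∀ v, fdeg F v = 1 → v ∈ Y) →
    y0 ∈ Y → fdeg F y0 = 0 →
    ∀ z, GS G F y0 l z → (l.map Prod.fst).Nodup →
    (∃ x w, G.Adj z x ∧ F.Adj x w ∧ fdeg F w = 2) →
    ∃ F', F' ≤ G ∧ F'.IsAcyclic ∧ (∀ x ∈ X, fdeg F' x = 2) ∧ (∀ y ∈ Y, fdeg F' y ≤ 2) ∧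
      (∀ v, fdeg F' v = 1 → v ∈ Y) ∧ (∀ y ∈ Y, 0 < fdeg F' y ↔ (0 < fdeg F y ∨ y = y0)) := by
  intro l
  induction l with
  | nil =>
    intro F y0 hFG hacyc hFX hFY hends hy0 hdeg0 z hgs hnodup hterm
    have hz : z = y0 := GS.nil_iff.mp hgs
    obtain ⟨x, w, hzx, hxw, hw2⟩ := hterm
    rw [hz] at hzx
    have hxX : x ∈ X := adj_mem_X hpart hbip hy0 hzx
    have hx2 : fdeg F x = 2 := hFX x hxX
    have hwY : w ∈ Y := adj_mem_Y hpart hbip hxX (hFG hxw)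
    have hy0x : y0 ≠ x := swap_ne_ax hdeg0 hxw
    have hy0w : y0 ≠ w := swap_ne_au hdeg0 hxw
    refine ⟨swap F y0 x w, swap_le hdeg0 hxw hFG hzx, swap_acyclic hdeg0 hxw hacyc, ?_, ?_, ?_, ?_⟩
    · intro x' hx'
      by_cases hxx : x' = x
      · rw [hxx, swap_fdeg_x hdeg0 hxw]; exact hx2
      · rw [swap_fdeg_other hdeg0 hxw
          (fun h => mem_Y_not_X hpart hy0 (h ▸ hx')) hxx
          (fun h => mem_Y_not_X hpart hwY (h ▸ hx'))]
        exact hFX x' hx'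
    · intro y hy
      by_cases h1 : y = y0
      · rw [h1, swap_fdeg_a hdeg0 hxw]; omega
      · by_cases h2 : y = w
        · rw [h2, swap_fdeg_u hdeg0 hxw]; omega
        · rw [swap_fdeg_other hdeg0 hxw h1
            (fun h => mem_X_not_Y hpart hxX (h ▸ hy)) h2]
          exact hFY y hy
    · intro v hv
      by_cases h1 : v = y0
      · exact h1 ▸ hy0
      · by_cases h2 : v = w
        · exact h2 ▸ hwY
        · by_cases h3 : v = x
          · rw [h3, swap_fdeg_x hdeg0 hxw, hx2] at hv; omega
          · rw [swap_fdeg_other hdeg0 hxw h1 h3 h2] at hv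
            exact hends v hv
    · intro y hy
      by_cases h1 : y = y0
      · rw [h1, swap_fdeg_a hdeg0 hxw]
        simp
      · by_cases h2 : y = w
        · rw [h2, swap_fdeg_u hdeg0 hxw, hw2]
          norm_num
        · rw [swap_fdeg_other hdeg0 hxw h1
            (fun h => mem_X_not_Y hpart hxX (h ▸ hy)) h2]
          simp [h1]
  | cons hd t ih =>
    obtain ⟨x, u⟩ := hd
    intro F y0 hFG hacyc hFX hFY hends hy0 hdeg0 z hgs hnodup hterm
    rw [GS.cons_iff] at hgs
    obtain ⟨hyx, hD, hxu, ht⟩ := hgs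
    simp only [List.map_cons, List.nodup_cons] at hnodup
    obtain ⟨hxnot, hnodup'⟩ := hnodup
    have hxX : x ∈ X := adj_mem_X hpart hbip hy0 hyx
    have hx2 : fdeg F x = 2 := hFX x hxX
    have huY : u ∈ Y := adj_mem_Y hpart hbip hxX (hFG hxu)
    have hu1 : fdeg F u = 1 := hD u hxu
    have huy0 : u ≠ y0 := fun h => by rw [h, hdeg0] at hu1; omega
    set F1 := swap F y0 x u with hF1
    have hF1G : F1 ≤ G := swap_le hdeg0 hxu hFG hyx
    have hF1acyc : F1.IsAcyclic := swap_acyclic hdeg0 hxu hacyc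
    have hdx : fdeg F1 x = 2 := by rw [hF1, swap_fdeg_x hdeg0 hxu]; exact hx2
    have hdu : fdeg F1 u = 0 := by rw [hF1, swap_fdeg_u hdeg0 hxu, hu1]
    have hdy0 : fdeg F1 y0 = 1 := by rw [hF1, swap_fdeg_a hdeg0 hxu]
    have hF1X : ∀ x' ∈ X, fdeg F1 x' = 2 := by
      intro x' hx'
      by_cases hxx : x' = x
      · rw [hxx]; exact hdx
      · rw [hF1, swap_fdeg_other hdeg0 hxu
          (fun h => mem_Y_not_X hpart hy0 (h ▸ hx')) hxx
          (fun h => mem_Y_not_X hpart huY (h ▸ hx'))]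
        exact hFX x' hx'
    have hF1Y : ∀ y ∈ Y, fdeg F1 y ≤ 2 := by
      intro y hy
      by_cases h1 : y = y0
      · rw [h1, hdy0]; omega
      · by_cases h2 : y = u
        · rw [h2, hdu]; omega
        · rw [hF1, swap_fdeg_other hdeg0 hxu h1
            (fun h => mem_X_not_Y hpart hxX (h ▸ hy)) h2]
          exact hFY y hy
    have hF1ends : ∀ v, fdeg F1 v = 1 → v ∈ Y := by
      intro v hv
      by_cases h1 : v = y0
      · exact h1 ▸ hy0
      · by_cases h2 : v = u
        · rw [h2, hdu] at hv; omega
        · by_cases h3 : v = x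
          · rw [h3, hdx] at hv; omega
          · rw [hF1, swap_fdeg_other hdeg0 hxu h1 h3 h2] at hv
            exact hends v hv
    have hgs1 : GS G F1 u t z := GS.transfer hdeg0 hxu hx2 hD ht hxnot
    have hzY : z ∈ Y := GS.inY hpart hbip hFG ht huY
    -- transfer the terminal
    obtain ⟨x', w, hzx', hx'w, hw2⟩ := hterm
    have hx'X : x' ∈ X := adj_mem_X hpart hbip hzY hzx'
    have hwY : w ∈ Y := adj_mem_Y hpart hbip hx'X (hFG hx'w)
    have hx'x : x' ≠ x := by
      intro h
      rw [hD w (h ▸ hx'w)] at hw2; omega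
    have hx'u : x' ≠ u := fun h => mem_X_not_Y hpart hx'X (h ▸ huY)
    have hwy0 : w ≠ y0 := fun h => by rw [h, hdeg0] at hw2; omega
    have hwu : w ≠ u := fun h => by rw [h, hu1] at hw2; omega
    have hF1adj : F1.Adj x' w := by
      rw [hF1, swap_adj]
      exact Or.inl ⟨hx'w, by rintro (⟨h, -⟩ | ⟨h, -⟩) <;> [exact hx'x h; exact hx'u h]⟩
    have hF1w : fdeg F1 w = 2 := by
      by_cases hwx : w = x
      · rw [hwx]; exact hdx
      · rw [hF1, swap_fdeg_other hdeg0 hxu hwy0 hwx hwu]; exact hw2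
    obtain ⟨F', hc1, hc2, hc3, hc4, hc5, hc6⟩ :=
      ih F1 u hF1G hF1acyc hF1X hF1Y hF1ends huY hdu z hgs1 hnodup'
        ⟨x', w, hzx', hF1adj, hF1w⟩
    refine ⟨F', hc1, hc2, hc3, hc4, hc5, ?_⟩
    intro y hy
    rw [hc6 y hy]
    by_cases h1 : y = y0
    · rw [h1]
      simp [hdy0]
    · by_cases h2 : y = u
      · rw [h2]
        simp [hu1]
      · have : fdeg F1 y = fdeg F y := by
          rw [hF1, swap_fdeg_other hdeg0 hxu h1
            (fun h => mem_X_not_Y hpart hxX (h ▸ hy)) h2]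
        rw [this]
        simp [h1, h2]


end PPF

/-- Let `F` be a pseudo path factor of a simple (3,4)-biregular bipartite graph `G`
with bipartition `(Y, X)`, and suppose `y0 ∈ Y` has degree 0 in `F`.  Then there is
a pseudo path factor `F'` of `G` whose set of covered `Y`-vertices equals the set
covered by `F` together with `y0`. -/
theorem stmt_5 {V : Type*} [Fintype V] (G : SimpleGraph V) (Y X : Finset V)
    (hpart : ∀ v, (v ∈ Y ∧ v ∉ X) ∨ (v ∈ X ∧ v ∉ Y))
    (hbip : ∀ u v, G.Adj u v → (u ∈ Y ∧ v ∈ X) ∨ (u ∈ X ∧ v ∈ Y))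
    (hY : ∀ y ∈ Y, fdeg G y = 3) (hX : ∀ x ∈ X, fdeg G x = 4)
    (F : SimpleGraph V) (hFG : F ≤ G) (hacyc : F.IsAcyclic)
    (hFX : ∀ x ∈ X, fdeg F x = 2) (hFY : ∀ y ∈ Y, fdeg F y ≤ 2)
    (hends : ∀ v, fdeg F v = 1 → v ∈ Y)
    (y0 : V) (hy0 : y0 ∈ Y) (hdeg0 : fdeg F y0 = 0) :
    ∃ F' : SimpleGraph V, F' ≤ G ∧ F'.IsAcyclic ∧
      (∀ x ∈ X, fdeg F' x = 2) ∧ (∀ y ∈ Y, fdeg F' y ≤ 2) ∧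
      (∀ v, fdeg F' v = 1 → v ∈ Y) ∧
      (∀ y ∈ Y, 0 < fdeg F' y ↔ (0 < fdeg F y ∨ y = y0)) := by
  classical
  open PPF Finset in
  by_contra hno
  -- every G-neighbor of every reachable vertex is a 2-center
  have hclosed : ∀ v, (∃ l, GS G F y0 l v) → ∀ x, G.Adj v x → ∀ w, F.Adj x w →
      fdeg F w = 1 := by
    rintro v ⟨l, hl⟩ x hvx w hxw
    by_contra hne
    have hvY : v ∈ Y := GS.inY hpart hbip hFG hl hy0
    have hxX : x ∈ X := adj_mem_X hpart hbip hvY hvx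
    have hwY : w ∈ Y := adj_mem_Y hpart hbip hxX (hFG hxw)
    have hw2 : fdeg F w = 2 := by
      have h1 : 0 < fdeg F w := fdeg_pos_of_adj hxw.symm
      have h2 := hFY w hwY
      omega
    obtain ⟨l', hl', hnd, -⟩ := GS.shorten l.length l y0 v le_rfl hl
    exact hno (main_aux G Y X hpart hbip l' F y0 hFG hacyc hFX hFY hends hy0 hdeg0 v
      hl' hnd ⟨x, w, hvx, hxw, hw2⟩)
  obtain ⟨B, hBmem⟩ : ∃ B : Finset V, ∀ v, v ∈ B ↔ ∃ l, GS G F y0 l v :=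
    ⟨Finset.univ.filter (fun v => ∃ l, GS G F y0 l v), fun v => by simp⟩
  obtain ⟨A, hAmem⟩ : ∃ A : Finset V, ∀ x, x ∈ A ↔ ∃ v ∈ B, G.Adj v x :=
    ⟨B.biUnion (fun v => Finset.univ.filter (fun x => G.Adj v x)), fun x => by simp⟩
  have hy0B : y0 ∈ B := (hBmem y0).mpr ⟨[], GS.nil y0⟩
  have hBY : ∀ v ∈ B, v ∈ Y := by
    intro v hv
    obtain ⟨l, hl⟩ := (hBmem v).mp hv
    exact GS.inY hpart hbip hFG hl hy0
  have hAX : ∀ x ∈ A, x ∈ X := by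
    intro x hx
    obtain ⟨v, hv, hvx⟩ := (hAmem x).mp hx
    exact adj_mem_X hpart hbip (hBY v hv) hvx
  have hclosureB : ∀ x ∈ A, ∀ w, F.Adj x w → w ∈ B := by
    intro x hx w hxw
    obtain ⟨v, hv, hvx⟩ := (hAmem x).mp hx
    obtain ⟨l, hl⟩ := (hBmem v).mp hv
    exact (hBmem w).mpr ⟨l ++ [(x, w)], hl.snoc hvx (hclosed v ⟨l, hl⟩ x hvx) hxw⟩
  have hBdeg : ∀ v ∈ B, v ≠ y0 → fdeg F v = 1 := by
    intro v hv hne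
    obtain ⟨l, hl⟩ := (hBmem v).mp hv
    rcases hl.foot with h | ⟨x, hD, hxv⟩
    · exact absurd h hne
    · exact hD v hxv
  -- counting 1 : 3 * B.card ≤ 4 * A.card
  have inner1 : ∀ v ∈ B, (∑ x ∈ A, if G.Adj v x then 1 else 0) = 3 := by
    intro v hv
    rw [← Finset.card_filter]
    have heq : A.filter (fun x => G.Adj v x) = Finset.univ.filter (fun x => G.Adj v x) := by
      ext x
      simp only [Finset.mem_filter, Finset.mem_univ, true_and]
      exact ⟨fun h => h.2, fun h => ⟨(hAmem x).mpr ⟨v, hv, h⟩, h⟩⟩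
    rw [heq, ← fdeg_eq_filter]
    exact hY v (hBY v hv)
  have inner2 : ∀ x ∈ A, (∑ v ∈ B, if G.Adj v x then 1 else 0) ≤ 4 := by
    intro x hx
    rw [← Finset.card_filter]
    calc (B.filter (fun v => G.Adj v x)).card
        ≤ (Finset.univ.filter (fun v => G.Adj v x)).card :=
          Finset.card_le_card (Finset.filter_subset_filter _ (Finset.subset_univ B))
      _ = fdeg G x := by
          rw [fdeg_eq_filter]
          congr 1
          ext v
          simp [SimpleGraph.adj_comm]
      _ = 4 := hX x (hAX x hx)
  have count1 : 3 * B.card ≤ 4 * A.card := by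
    calc 3 * B.card = ∑ v ∈ B, (3 : ℕ) := by rw [Finset.sum_const, smul_eq_mul, mul_comm]
      _ = ∑ v ∈ B, ∑ x ∈ A, if G.Adj v x then 1 else 0 :=
          (Finset.sum_congr rfl inner1).symm
      _ = ∑ x ∈ A, ∑ v ∈ B, if G.Adj v x then 1 else 0 := Finset.sum_comm
      _ ≤ ∑ x ∈ A, (4 : ℕ) := Finset.sum_le_sum inner2
      _ = 4 * A.card := by rw [Finset.sum_const, smul_eq_mul, mul_comm]
  -- counting 2 : 2 * A.card ≤ B.card - 1
  have inner3 : ∀ x ∈ A, (∑ w ∈ B, if F.Adj x w then 1 else 0) = 2 := by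
    intro x hx
    rw [← Finset.card_filter]
    have heq : B.filter (fun w => F.Adj x w) = Finset.univ.filter (fun w => F.Adj x w) := by
      ext w
      simp only [Finset.mem_filter, Finset.mem_univ, true_and]
      exact ⟨fun h => h.2, fun h => ⟨hclosureB x hx w h, h⟩⟩
    rw [heq, ← fdeg_eq_filter]
    exact hFX x (hAX x hx)
  have inner4 : ∀ w ∈ B, (∑ x ∈ A, if F.Adj x w then 1 else 0) ≤ fdeg F w := by
    intro w hw
    rw [← Finset.card_filter]
    calc (A.filter (fun x => F.Adj x w)).card
        ≤ (Finset.univ.filter (fun x => F.Adj x w)).card :=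
          Finset.card_le_card (Finset.filter_subset_filter _ (Finset.subset_univ A))
      _ = fdeg F w := by
          rw [fdeg_eq_filter]
          congr 1
          ext x
          simp [SimpleGraph.adj_comm]
  have hsumB : ∑ w ∈ B, fdeg F w = B.card - 1 := by
    rw [← Finset.sum_erase_add B _ hy0B, hdeg0, Nat.add_zero]
    rw [Finset.sum_congr rfl (fun v hv => hBdeg v (Finset.mem_of_mem_erase hv)
      (Finset.ne_of_mem_erase hv))]
    rw [Finset.sum_const, smul_eq_mul, mul_one, Finset.card_erase_of_mem hy0B]
  have count2 : 2 * A.card ≤ B.card - 1 := by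
    calc 2 * A.card = ∑ x ∈ A, (2 : ℕ) := by rw [Finset.sum_const, smul_eq_mul, mul_comm]
      _ = ∑ x ∈ A, ∑ w ∈ B, if F.Adj x w then 1 else 0 :=
          (Finset.sum_congr rfl inner3).symm
      _ = ∑ w ∈ B, ∑ x ∈ A, if F.Adj x w then 1 else 0 := Finset.sum_comm
      _ ≤ ∑ w ∈ B, fdeg F w := Finset.sum_le_sum inner4
      _ = B.card - 1 := hsumB
  have hBpos : 1 ≤ B.card := Finset.card_pos.mpr ⟨y0, hy0B⟩
  omega
end

section
/- There exists a (3,4)-biregular bipartite multigraph that has no path factor in which every component path has both endpoints on the degree-3 side. Concretely, the multigraph formed by three triple-edges x_i y_i (i = 1,2,3) together with an extra vertex y_0 joined by single edges to x_1, x_2, x_3 is (3,4)-biregular but admits no such path factor. -/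
/-- The edge-endpoint map of the multigraph on `Y = {0,1,2,3}` (the `yᵢ`) and
`X = {4,5,6}` (the `xᵢ`): three parallel edges between `yᵢ` and `xᵢ` for
`i = 1,2,3`, and one edge from `y₀` to each `xᵢ`. -/
def mgEnds : Fin 12 → Sym2 (Fin 7) :=
  ![s(1,4), s(1,4), s(1,4), s(2,5), s(2,5), s(2,5), s(3,6), s(3,6), s(3,6),
    s(0,4), s(0,5), s(0,6)]

lemma mg4 : ∀ (e : Fin 12) (v : Fin 7), mgEnds e = s(4, v) → v = 0 ∨ v = 1 := by decide

lemma mg5 : ∀ (e : Fin 12) (v : Fin 7), mgEnds e = s(5, v) → v = 0 ∨ v = 2 := by decide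

lemma mg6 : ∀ (e : Fin 12) (v : Fin 7), mgEnds e = s(6, v) → v = 0 ∨ v = 3 := by decide

/-- This multigraph is (3,4)-biregular but has no path factor whose component
paths all have both endpoints in `Y`.  A path factor is encoded by its edge set
`S`: since its components are paths, no two parallel edges occur in `S` (so
`mgEnds` is injective on `S`) and the associated simple graph `H` is acyclic with
every vertex of degree 1 or 2; the endpoint condition says all degree-1 vertices
of `H` lie in `Y`. -/
theorem stmt_7 :
    (∀ y ∈ ({0, 1, 2, 3} : Finset (Fin 7)),
      (Finset.univ.filter (fun e => y ∈ mgEnds e)).card = 3) ∧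
    (∀ x ∈ ({4, 5, 6} : Finset (Fin 7)),
      (Finset.univ.filter (fun e => x ∈ mgEnds e)).card = 4) ∧
    ¬ ∃ S : Finset (Fin 12), Set.InjOn mgEnds ↑S ∧
        ∀ H : SimpleGraph (Fin 7),
          H = SimpleGraph.fromRel (fun u v => ∃ e ∈ S, mgEnds e = s(u, v)) →
          H.IsAcyclic ∧ (∀ v, 1 ≤ (H.neighborSet v).ncard) ∧
            (∀ v, (H.neighborSet v).ncard ≤ 2) ∧
            (∀ v, (H.neighborSet v).ncard = 1 → v ∈ ({0, 1, 2, 3} : Finset (Fin 7))) := by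
  refine ⟨by decide, by decide, ?_⟩
  rintro ⟨S, hinj, hprop⟩
  set H := SimpleGraph.fromRel (fun u v => ∃ e ∈ S, mgEnds e = s(u, v)) with hH
  obtain ⟨hac, hge, hle, hleaf⟩ := hprop H rfl
  have hadj : ∀ u v : Fin 7, H.Adj u v ↔ u ≠ v ∧ ∃ e ∈ S, mgEnds e = s(u, v) := by
    intro u v
    rw [hH, SimpleGraph.fromRel_adj]
    constructor
    · rintro ⟨hne, h | ⟨e, he, hm⟩⟩
      · exact ⟨hne, h⟩
      · exact ⟨hne, e, he, by rwa [Sym2.eq_swap]⟩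
    · rintro ⟨hne, h⟩; exact ⟨hne, Or.inl h⟩
  -- each x_i is adjacent to 0
  have hx : ∀ x w : Fin 7,
      (∀ (e : Fin 12) (v : Fin 7), mgEnds e = s(x, v) → v = 0 ∨ v = w) →
      x ∉ ({0, 1, 2, 3} : Finset (Fin 7)) → H.Adj x 0 := by
    intro x w hkey hxY
    by_contra h
    have hsub : H.neighborSet x ⊆ {w} := by
      intro u hu
      obtain ⟨hne, e, he, hm⟩ := (hadj x u).1 hu
      rcases hkey e u hm with rfl | rfl
      · exact absurd hu h
      · rfl
    have hc : (H.neighborSet x).ncard ≤ 1 := by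
      have := Set.ncard_le_ncard hsub (Set.finite_singleton w)
      simpa using this
    exact hxY (hleaf x (le_antisymm hc (hge x)))
  have h4 : H.Adj 4 0 := hx 4 1 mg4 (by decide)
  have h5 : H.Adj 5 0 := hx 5 2 mg5 (by decide)
  have h6 : H.Adj 6 0 := hx 6 3 mg6 (by decide)
  have hsub : ({4, 5, 6} : Set (Fin 7)) ⊆ H.neighborSet 0 := by
    intro u hu
    rcases hu with rfl | rfl | rfl
    · exact h4.symm
    · exact h5.symm
    · exact h6.symm
  have h3 : 3 ≤ (H.neighborSet 0).ncard := by
    have hcard : ({4, 5, 6} : Set (Fin 7)).ncard = 3 := by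
      rw [show ({4, 5, 6} : Set (Fin 7)) = ↑({4, 5, 6} : Finset (Fin 7)) by simp,
        Set.ncard_coe_finset]
      decide
    rw [← hcard]
    exact Set.ncard_le_ncard hsub (Set.toFinite _)
  have := hle 0
  omega
end
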